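/- For every real number x, Σ_{n ≥ 0} Σ_{m ≥ 0} x^{n+m+1}/((n+m+1)·n!·m!) = (e^{2x} − 1)/2, where the double series converges absolutely. -/

import Mathlib

open Finset

set_option maxHeartbeats 1000000

theorem stmt15 (x : ℝ) :
    Summable (fun p : ℕ × ℕ =>
      x ^ (p.1 + p.2 + 1) /
        (((p.1 + p.2 + 1 : ℕ) : ℝ) * (Nat.factorial p.1 : ℝ) * (Nat.factorial p.2 : ℝ))) ∧
    (∑' p : ℕ × ℕ,
        x ^ (p.1 + p.2 + 1) /
          (((p.1 + p.2 + 1 : ℕ) : ℝ) * (Nat.factorial p.1 : ℝ) * (Nat.factorial p.2 : ℝ)))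
      = (Real.exp (2 * x) - 1) / 2 := by
  set F : ℕ × ℕ → ℝ := fun p => x ^ (p.1 + p.2 + 1) /
        (((p.1 + p.2 + 1 : ℕ) : ℝ) * (Nat.factorial p.1 : ℝ) * (Nat.factorial p.2 : ℝ)) with hF
  have h1 : Summable (fun n : ℕ => |x| ^ (n + 1) / n.factorial) := by
    have := (Real.summable_pow_div_factorial |x|).mul_left |x|
    refine this.congr fun n => ?_
    rw [pow_succ']; ring
  have h2 : Summable (fun m : ℕ => |x| ^ m / m.factorial) := Real.summable_pow_div_factorial |x|
  have hprod : Summable (fun p : ℕ × ℕ =>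
      (|x| ^ (p.1 + 1) / p.1.factorial) * (|x| ^ p.2 / p.2.factorial)) :=
    h1.mul_of_nonneg h2 (fun n => by positivity) (fun m => by positivity)
  have habs : Summable fun p : ℕ × ℕ => |F p| := by
    refine hprod.of_nonneg_of_le (fun p => abs_nonneg _) fun p => ?_
    have hd : (0:ℝ) < ((p.1 + p.2 + 1 : ℕ) : ℝ) * p.1.factorial * p.2.factorial := by
      positivity
    rw [hF, abs_div, abs_of_pos hd, abs_pow]
    rw [div_le_iff₀ hd]
    have h1' : (0:ℝ) < p.1.factorial := by positivity
    have h2' : (0:ℝ) < p.2.factorial := by positivity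
    have key : |x| ^ (p.1 + p.2 + 1) =
        (|x| ^ (p.1 + 1) / p.1.factorial) * (|x| ^ p.2 / p.2.factorial) *
          ((p.1.factorial : ℝ) * p.2.factorial) := by
      field_simp
      ring
    calc |x| ^ (p.1 + p.2 + 1)
        ≤ (|x| ^ (p.1 + 1) / p.1.factorial) * (|x| ^ p.2 / p.2.factorial) *
          ((p.1.factorial : ℝ) * p.2.factorial) := key.le
      _ ≤ (|x| ^ (p.1 + 1) / p.1.factorial) * (|x| ^ p.2 / p.2.factorial) *
          (((p.1 + p.2 + 1 : ℕ) : ℝ) * p.1.factorial * p.2.factorial) := by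
          have hnn : (0:ℝ) ≤ (|x| ^ (p.1 + 1) / p.1.factorial) * (|x| ^ p.2 / p.2.factorial) := by
            positivity
          refine mul_le_mul_of_nonneg_left ?_ hnn
          have h3' : (1:ℝ) ≤ ((p.1 + p.2 + 1 : ℕ) : ℝ) := by
            exact_mod_cast Nat.one_le_iff_ne_zero.mpr (by omega)
          nlinarith [h1', h2']
  have hsum : Summable F := summable_abs_iff.mp habs
  refine ⟨hsum, ?_⟩
  -- diagonal resummation
  have key : ∀ k : ℕ, ∑ p ∈ Finset.HasAntidiagonal.antidiagonal k, F p =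
      (2 * x) ^ (k + 1) / (2 * (k + 1).factorial) := by
    intro k
    have step : ∀ p ∈ Finset.HasAntidiagonal.antidiagonal k,
        F p = (k.choose p.1 : ℝ) * (x ^ (k + 1) / (k + 1).factorial) := by
      rintro ⟨n, m⟩ hp
      rw [Finset.HasAntidiagonal.mem_antidiagonal] at hp
      simp only at hp
      subst hp
      simp only [hF]
      have hfact : ((n + m).choose n : ℝ) * n.factorial * m.factorial
          = (n + m).factorial := by
        have := Nat.choose_mul_factorial_mul_factorial (Nat.le_add_right n m)
        rw [Nat.add_sub_cancel_left] at this
        exact_mod_cast this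
      have h1' : (0:ℝ) < n.factorial := by positivity
      have h2' : (0:ℝ) < m.factorial := by positivity
      have hk1 : ((n + m + 1).factorial : ℝ) = ((n + m : ℕ) + 1) * (n + m).factorial := by
        rw [Nat.factorial_succ]; push_cast; ring
      have hc : ((n + m + 1 : ℕ) : ℝ) = ((n + m : ℕ) : ℝ) + 1 := by push_cast; ring
      rw [hk1, hc]
      field_simp
      push_cast at hfact ⊢
      linear_combination (-(x ^ (n + m + 1))) * hfact
    rw [Finset.sum_congr rfl step, ← Finset.sum_mul]
    have hchoose : ∑ p ∈ Finset.HasAntidiagonal.antidiagonal k, (k.choose p.1 : ℝ) = 2 ^ k := by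
      rw [Finset.Nat.sum_antidiagonal_eq_sum_range_succ_mk]
      exact_mod_cast congrArg (Nat.cast (R := ℝ)) (Nat.sum_range_choose k)
    rw [hchoose, mul_pow, pow_succ 2 k]
    have : ((k+1).factorial : ℝ) ≠ 0 := by positivity
    field_simp
  -- sigma decomposition
  have hsig : Summable (fun s : (Σ k : ℕ, (Finset.HasAntidiagonal.antidiagonal k : Finset (ℕ × ℕ))) => F (Finset.HasAntidiagonal.sigmaAntidiagonalEquivProd (A := ℕ) s)) :=
    (Finset.HasAntidiagonal.sigmaAntidiagonalEquivProd (A := ℕ)).summable_iff.mpr hsum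
  rw [← (Finset.HasAntidiagonal.sigmaAntidiagonalEquivProd (A := ℕ)).tsum_eq F, Summable.tsum_sigma hsig]
  have h4 : ∀ k : ℕ, ∑' c : (Finset.HasAntidiagonal.antidiagonal k : Finset (ℕ × ℕ)), F (Finset.HasAntidiagonal.sigmaAntidiagonalEquivProd (A := ℕ) ⟨k, c⟩)
      = (2 * x) ^ (k + 1) / (2 * (k + 1).factorial) := by
    intro k
    have hc : ∀ c : (Finset.HasAntidiagonal.antidiagonal k : Finset (ℕ × ℕ)), F (Finset.HasAntidiagonal.sigmaAntidiagonalEquivProd (A := ℕ) ⟨k, c⟩) = F c :=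
      fun c => rfl
    rw [tsum_congr hc, Finset.tsum_subtype _ F]
    exact key k
  rw [tsum_congr h4]
  -- final exponential evaluation
  have hexp : Real.exp (2 * x) = ∑' n : ℕ, (2 * x) ^ n / n.factorial := by
    rw [Real.exp_eq_exp_ℝ, NormedSpace.exp_eq_tsum_div]
  have hsummexp : Summable (fun n : ℕ => (2 * x) ^ n / n.factorial) :=
    Real.summable_pow_div_factorial (2 * x)
  rw [hexp, Summable.tsum_eq_zero_add hsummexp]
  simp only [pow_zero, Nat.factorial_zero, Nat.cast_one, div_one, add_sub_cancel_left]
  rw [← tsum_div_const]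
  exact tsum_congr fun k => by rw [div_div]; ring_nf
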